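/- For X ∈ ℝ^{n×m} with rank r, γ > 0, and W_{γ,X} := (X Xᵀ + γI)⁻¹, we have ‖W_{γ,X}^{1/2} X‖_F² = Σ_{i=1}^r σ_i(X)²/(σ_i(X)² + γ), and consequently ‖W_{γ,X}^{1/2} X‖_F² → rank(X) as γ → 0⁺. -/

import Mathlib

open Matrix Filter

lemma isHerm {n m : ℕ} (X : Matrix (Fin n) (Fin m) ℝ) : (X * Xᵀ).IsHermitian := by
  have h : Xᵀ = Xᴴ := by
    ext i j
    simp [Matrix.conjTranspose_apply]
  rw [h]
  exact Matrix.isHermitian_mul_conjTranspose_self X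

open scoped ComplexOrder in
/-- The square root of a positive semidefinite matrix, as defined in the older Mathlib. -/
noncomputable def Matrix.PosSemidef.sqrt {n 𝕜 : Type*} [Fintype n] [DecidableEq n] [RCLike 𝕜]
    {A : Matrix n n 𝕜} (hA : A.PosSemidef) : Matrix n n 𝕜 :=
  hA.1.eigenvectorUnitary.1 * diagonal ((↑) ∘ (Real.sqrt ∘ hA.1.eigenvalues)) *
    (star hA.1.eigenvectorUnitary : Matrix n n 𝕜)

lemma psdSqrt_transpose {n : ℕ} {A : Matrix (Fin n) (Fin n) ℝ} (hA : A.PosSemidef) :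
    hA.sqrtᵀ = hA.sqrt := by
  unfold Matrix.PosSemidef.sqrt
  simp only [Matrix.transpose_mul, Matrix.diagonal_transpose, Matrix.mul_assoc,
    Matrix.star_eq_conjTranspose, Matrix.conjTranspose_eq_transpose_of_trivial,
    Matrix.transpose_transpose, Unitary.coe_star]

lemma psdSqrt_mul_self {n : ℕ} {A : Matrix (Fin n) (Fin n) ℝ} (hA : A.PosSemidef) :
    hA.sqrt * hA.sqrt = A := by
  have hU' : star (hA.1.eigenvectorUnitary : Matrix (Fin n) (Fin n) ℝ)
      * (hA.1.eigenvectorUnitary : Matrix (Fin n) (Fin n) ℝ) = 1 :=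
    (Matrix.mem_unitaryGroup_iff').mp (hA.1.eigenvectorUnitary).2
  have hs := hA.1.spectral_theorem
  unfold Matrix.PosSemidef.sqrt
  conv_rhs => rw [hs]
  calc _ = (hA.1.eigenvectorUnitary : Matrix (Fin n) (Fin n) ℝ)
        * (diagonal ((↑) ∘ (Real.sqrt ∘ hA.1.eigenvalues)) * ((star (hA.1.eigenvectorUnitary : Matrix (Fin n) (Fin n) ℝ)
        * (hA.1.eigenvectorUnitary : Matrix (Fin n) (Fin n) ℝ)) * diagonal ((↑) ∘ (Real.sqrt ∘ hA.1.eigenvalues))))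
        * star (hA.1.eigenvectorUnitary : Matrix (Fin n) (Fin n) ℝ) := by
        simp only [Matrix.mul_assoc]
        rfl
    _ = _ := by
        rw [hU', one_mul, Matrix.diagonal_mul_diagonal]
        have hd : (fun i => (((fun x : ℝ => x) ∘ (Real.sqrt ∘ hA.1.eigenvalues)) i : ℝ)
            * ((fun x : ℝ => x) ∘ (Real.sqrt ∘ hA.1.eigenvalues)) i)
            = hA.1.eigenvalues := by
          funext i
          simp [Real.mul_self_sqrt (hA.eigenvalues_nonneg i)]
        rw [hd, Unitary.conjStarAlgAut_apply]
        rfl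

/-- The singular values of `X`, in decreasing order. -/
noncomputable def singval {n m : ℕ} (X : Matrix (Fin n) (Fin m) ℝ) : Fin n → ℝ :=
  fun i => Real.sqrt
    (((isHerm X).eigenvalues ∘ Tuple.sort ((isHerm X).eigenvalues)) i.rev)

lemma psdXXt {n m : ℕ} (X : Matrix (Fin n) (Fin m) ℝ) : (X * Xᵀ).PosSemidef := by
  have h : Xᵀ = Xᴴ := by ext i j; simp [Matrix.conjTranspose_apply]
  rw [h]
  exact Matrix.posSemidef_self_mul_conjTranspose X

-- abbreviations
noncomputable def ev {n m : ℕ} (X : Matrix (Fin n) (Fin m) ℝ) : Fin n → ℝ := (isHerm X).eigenvalues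

lemma ev_nonneg {n m : ℕ} (X : Matrix (Fin n) (Fin m) ℝ) (i : Fin n) : 0 ≤ ev X i :=
  (psdXXt X).eigenvalues_nonneg i

-- spectral decomposition with shift
lemma shift_decomp {n m : ℕ} (X : Matrix (Fin n) (Fin m) ℝ) (γ : ℝ) :
    X * Xᵀ + γ • (1 : Matrix (Fin n) (Fin n) ℝ) =
      ((isHerm X).eigenvectorUnitary : Matrix (Fin n) (Fin n) ℝ) * Matrix.diagonal (fun i => ev X i + γ)
        * star ((isHerm X).eigenvectorUnitary : Matrix (Fin n) (Fin n) ℝ) := by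
  set U : Matrix (Fin n) (Fin n) ℝ := ((isHerm X).eigenvectorUnitary : Matrix (Fin n) (Fin n) ℝ)
  have hU : U * star U = 1 := (Matrix.mem_unitaryGroup_iff).mp ((isHerm X).eigenvectorUnitary).2
  have h1 : X * Xᵀ = U * Matrix.diagonal (ev X) * star U := by
    have := (isHerm X).spectral_theorem
    rwa [RCLike.ofReal_real_eq_id, Function.id_comp] at this
  have h2 : Matrix.diagonal (fun i => ev X i + γ)
      = Matrix.diagonal (ev X) + γ • (1 : Matrix (Fin n) (Fin n) ℝ) := by
    rw [Matrix.smul_one_eq_diagonal, Matrix.diagonal_add]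
  rw [h2, mul_add, add_mul, h1]
  congr 1
  rw [Matrix.mul_smul, mul_one, Matrix.smul_mul, hU]

lemma inv_decomp {n m : ℕ} (X : Matrix (Fin n) (Fin m) ℝ) (γ : ℝ) (hγ : 0 < γ) :
    (X * Xᵀ + γ • (1 : Matrix (Fin n) (Fin n) ℝ))⁻¹ =
      ((isHerm X).eigenvectorUnitary : Matrix (Fin n) (Fin n) ℝ)
        * Matrix.diagonal (fun i => (ev X i + γ)⁻¹)
        * star ((isHerm X).eigenvectorUnitary : Matrix (Fin n) (Fin n) ℝ) := by
  set U : Matrix (Fin n) (Fin n) ℝ := ((isHerm X).eigenvectorUnitary : Matrix (Fin n) (Fin n) ℝ)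
  have hU : U * star U = 1 := (Matrix.mem_unitaryGroup_iff).mp ((isHerm X).eigenvectorUnitary).2
  have hU' : star U * U = 1 := (Matrix.mem_unitaryGroup_iff').mp ((isHerm X).eigenvectorUnitary).2
  apply Matrix.inv_eq_right_inv
  rw [shift_decomp]
  have hne : ∀ i, ev X i + γ ≠ 0 := fun i => ne_of_gt (add_pos_of_nonneg_of_pos (ev_nonneg X i) hγ)
  calc U * Matrix.diagonal (fun i => ev X i + γ) * star U
        * (U * Matrix.diagonal (fun i => (ev X i + γ)⁻¹) * star U)
      = U * (Matrix.diagonal (fun i => ev X i + γ) * ((star U * U)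
          * Matrix.diagonal (fun i => (ev X i + γ)⁻¹))) * star U := by
        simp only [Matrix.mul_assoc]
    _ = 1 := by
        rw [hU', one_mul, Matrix.diagonal_mul_diagonal]
        have : (fun i => (ev X i + γ) * (ev X i + γ)⁻¹) = fun _ => (1:ℝ) := by
          funext i; exact mul_inv_cancel₀ (hne i)
        rw [this, Matrix.diagonal_one, mul_one, hU]

lemma frob_eq_trace {n m : ℕ} (X : Matrix (Fin n) (Fin m) ℝ) (γ : ℝ) (hγ : 0 < γ)
    (h : ((X * Xᵀ + γ • (1 : Matrix (Fin n) (Fin n) ℝ))⁻¹).PosSemidef) :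
    (∑ i, ∑ j, ((h.sqrt * X) i j) ^ 2) = ∑ i, ev X i / (ev X i + γ) := by
  set U : Matrix (Fin n) (Fin n) ℝ := ((isHerm X).eigenvectorUnitary : Matrix (Fin n) (Fin n) ℝ)
  have hU' : star U * U = 1 := (Matrix.mem_unitaryGroup_iff').mp ((isHerm X).eigenvectorUnitary).2
  set S := h.sqrt with hS
  have hSt : Sᵀ = S := by
    exact psdSqrt_transpose h
  have h1 : (∑ i, ∑ j, ((S * X) i j) ^ 2) = Matrix.trace ((S * X) * (S * X)ᵀ) := by
    simp [Matrix.trace, Matrix.diag, Matrix.mul_apply, Matrix.transpose_apply, sq, mul_comm]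
  rw [h1]
  have h2 : (S * X) * (S * X)ᵀ = S * (X * Xᵀ) * S := by
    rw [Matrix.transpose_mul, hSt, Matrix.mul_assoc, Matrix.mul_assoc, Matrix.mul_assoc]
  have h3 : X * Xᵀ = U * Matrix.diagonal (ev X) * star U := by
    have := (isHerm X).spectral_theorem
    rwa [RCLike.ofReal_real_eq_id, Function.id_comp] at this
  rw [h2, Matrix.trace_mul_cycle S (X * Xᵀ) S, psdSqrt_mul_self h]
  calc ((X * Xᵀ + γ • (1 : Matrix (Fin n) (Fin n) ℝ))⁻¹ * (X * Xᵀ)).trace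
      = (U * Matrix.diagonal (fun i => (ev X i + γ)⁻¹) * star U
          * (U * Matrix.diagonal (ev X) * star U)).trace := by
        rw [inv_decomp X γ hγ, ← h3]
    _ = (U * (Matrix.diagonal (fun i => (ev X i + γ)⁻¹) * ((star U * U)
          * Matrix.diagonal (ev X))) * star U).trace := by simp only [Matrix.mul_assoc]
    _ = (U * Matrix.diagonal (fun i => (ev X i + γ)⁻¹ * ev X i) * star U).trace := by
        rw [hU', one_mul, Matrix.diagonal_mul_diagonal]
    _ = ((star U * U) * Matrix.diagonal (fun i => (ev X i + γ)⁻¹ * ev X i)).trace := by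
        rw [Matrix.trace_mul_cycle, Matrix.mul_assoc]
    _ = ∑ i, ev X i / (ev X i + γ) := by
        rw [hU', one_mul, Matrix.trace_diagonal]
        exact Finset.sum_congr rfl fun i _ => by rw [div_eq_inv_mul]

/-- decreasing rearrangement of eigenvalues -/
noncomputable def dd {n m : ℕ} (X : Matrix (Fin n) (Fin m) ℝ) : Fin n → ℝ :=
  fun i => ev X (Tuple.sort (ev X) i.rev)

lemma dd_nonneg {n m : ℕ} (X : Matrix (Fin n) (Fin m) ℝ) (i : Fin n) : 0 ≤ dd X i :=
  ev_nonneg X _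

lemma singval_sq {n m : ℕ} (X : Matrix (Fin n) (Fin m) ℝ) (i : Fin n) :
    singval X i ^ 2 = dd X i :=
  Real.sq_sqrt (dd_nonneg X i)

lemma dd_antitone {n m : ℕ} (X : Matrix (Fin n) (Fin m) ℝ) : Antitone (dd X) := by
  intro i j hij
  have := Tuple.monotone_sort (ev X) (Fin.rev_le_rev.mpr hij)
  simpa [dd, Function.comp] using this

lemma sum_perm {n m : ℕ} (X : Matrix (Fin n) (Fin m) ℝ) (f : ℝ → ℝ) :
    ∑ i, f (ev X i) = ∑ i, f (dd X i) := by
  have h1 : ∑ i, f (ev X (Tuple.sort (ev X) i)) = ∑ i, f (ev X i) :=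
    Equiv.sum_comp (Tuple.sort (ev X)) (fun i => f (ev X i))
  have h2 : ∑ i, f (ev X (Tuple.sort (ev X) (Fin.revPerm i))) =
      ∑ i, f (ev X (Tuple.sort (ev X) i)) :=
    Equiv.sum_comp Fin.revPerm (fun i => f (ev X (Tuple.sort (ev X) i)))
  rw [← h1, ← h2]
  rfl

lemma card_dd {n m : ℕ} (X : Matrix (Fin n) (Fin m) ℝ) :
    (Finset.univ.filter (fun i : Fin n => dd X i ≠ 0)).card = X.rank := by
  have h1 : X.rank = (X * Xᵀ).rank := (Matrix.rank_self_mul_transpose X).symm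
  rw [h1, (isHerm X).rank_eq_card_non_zero_eigs]
  rw [← Fintype.card_subtype]
  exact Fintype.card_congr
    (Equiv.subtypeEquiv (q := fun j => (isHerm X).eigenvalues j ≠ 0)
      (Fin.revPerm.trans (Tuple.sort (ev X))) (fun i => Iff.rfl))

lemma dd_ne_iff {n m : ℕ} (X : Matrix (Fin n) (Fin m) ℝ) (i : Fin n) :
    dd X i ≠ 0 ↔ (i : ℕ) < X.rank := by
  constructor
  · intro hi
    rw [← card_dd X]
    have hpos : 0 < dd X i := lt_of_le_of_ne (dd_nonneg X i) (Ne.symm hi)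
    have hsub : Finset.Iic i ⊆ Finset.univ.filter (fun j : Fin n => dd X j ≠ 0) := by
      intro j hj
      rw [Finset.mem_Iic] at hj
      refine Finset.mem_filter.mpr ⟨Finset.mem_univ _, ?_⟩
      exact ne_of_gt (lt_of_lt_of_le hpos (dd_antitone X hj))
    have := Finset.card_le_card hsub
    rw [Fin.card_Iic] at this
    omega
  · intro hi hzero
    have hsub : Finset.univ.filter (fun j : Fin n => dd X j ≠ 0) ⊆ Finset.Iio i := by
      intro j hj
      rw [Finset.mem_filter] at hj
      rw [Finset.mem_Iio]
      by_contra hc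
      push_neg at hc
      have : dd X j ≤ 0 := hzero ▸ dd_antitone X hc
      exact hj.2 (le_antisymm this (dd_nonneg X j))
    have := Finset.card_le_card hsub
    rw [Fin.card_Iio, card_dd X] at this
    omega
/-- For `W_{γ,X} = (X Xᵀ + γI)⁻¹` one has
`‖W_{γ,X}^{1/2} X‖_F² = ∑_{i=1}^r σ_i²/(σ_i² + γ)` where `r = rank X`, and this
quantity tends to `rank X` as `γ → 0⁺`. -/
theorem weighted_frobenius_eq_and_tendsto_rank {n m : ℕ} (hnm : n ≤ m)
    (X : Matrix (Fin n) (Fin m) ℝ) :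
    (∀ γ : ℝ, 0 < γ →
      ∀ h : ((X * Xᵀ + γ • (1 : Matrix (Fin n) (Fin n) ℝ))⁻¹).PosSemidef,
        (∑ i, ∑ j, ((h.sqrt * X) i j) ^ 2)
          = ∑ i ∈ Finset.univ.filter (fun i : Fin n => (i : ℕ) < X.rank),
              singval X i ^ 2 / (singval X i ^ 2 + γ)) ∧
    Tendsto
      (fun γ : ℝ =>
        ∑ i ∈ Finset.univ.filter (fun i : Fin n => (i : ℕ) < X.rank),
          singval X i ^ 2 / (singval X i ^ 2 + γ))
      (nhdsWithin 0 (Set.Ioi 0)) (nhds (X.rank : ℝ)) := by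
  have hcard : (Finset.univ.filter (fun i : Fin n => (i : ℕ) < X.rank)).card = X.rank := by
    have hfilt : (Finset.univ.filter (fun i : Fin n => (i : ℕ) < X.rank))
        = Finset.univ.filter (fun i : Fin n => dd X i ≠ 0) :=
      Finset.filter_congr (fun i _ => by simp [dd_ne_iff X i])
    rw [hfilt, card_dd]
  constructor
  · intro γ hγ h
    rw [frob_eq_trace X γ hγ h, sum_perm X (fun t => t / (t + γ))]
    simp only [singval_sq]
    have hsplit := Finset.sum_filter_add_sum_filter_not Finset.univ
      (fun i : Fin n => (i : ℕ) < X.rank) (fun i => dd X i / (dd X i + γ))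
    have hzero : ∑ i ∈ Finset.univ.filter (fun i : Fin n => ¬ (i : ℕ) < X.rank),
        dd X i / (dd X i + γ) = 0 := by
      apply Finset.sum_eq_zero
      intro i hi
      rw [Finset.mem_filter] at hi
      have hdi : dd X i = 0 := by
        by_contra hc; exact hi.2 ((dd_ne_iff X i).mp hc)
      rw [hdi, zero_div]
    rw [← hsplit, hzero, add_zero]
  · simp only [singval_sq]
    have hone : ((X.rank : ℝ))
        = ∑ _i ∈ Finset.univ.filter (fun i : Fin n => (i : ℕ) < X.rank), (1 : ℝ) := by
      rw [Finset.sum_const, nsmul_eq_mul, mul_one, hcard]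
    rw [hone]
    apply tendsto_finset_sum
    intro i hi
    rw [Finset.mem_filter] at hi
    have hne : dd X i ≠ 0 := (dd_ne_iff X i).mpr hi.2
    have h0 : Tendsto (fun γ : ℝ => dd X i + γ) (nhds 0) (nhds (dd X i)) := by
      simpa using (tendsto_const_nhds (x := dd X i) (f := nhds (0:ℝ))).add (tendsto_id (x := nhds (0:ℝ)))
    have h1 : Tendsto (fun γ : ℝ => dd X i / (dd X i + γ)) (nhds 0) (nhds 1) := by
      have := (tendsto_const_nhds (x := dd X i) (f := nhds (0:ℝ))).div h0 hne
      rwa [div_self hne] at this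
    exact h1.mono_left nhdsWithin_le_nhds
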